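/- Let G be a finite undirected connected simple graph on N ≥ 2 vertices with adjacency matrix A, degree matrix D = diag(A·1), combinatorial Laplacian L = D − A, and set Q = −L. Let κ > 0 and let (x*, y*) ∈ ℝ^N × ℝ^N have entrywise nonnegative entries with 1ᵀx* = 1ᵀy* = 1. If (x*, y*) is a fixed point of the interaction ODE, i.e. Qᵀx* + κ(x*ᵀy*)x* − κ·diag(y*)·x* = 0 and Qᵀy* + κ(x*ᵀy*)y* − κ·diag(x*)·y* = 0, then every entry of x* and every entry of y* is strictly positive. -/
import Mathlib


open Matrix Finset SimpleGraph

lemma aux_pos (N : ℕ)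
    (G : SimpleGraph (Fin N)) [DecidableRel G.Adj] (hconn : G.Connected)
    (L : Matrix (Fin N) (Fin N) ℝ)
    (hL : L = Matrix.diagonal (fun i => (G.degree i : ℝ)) - G.adjMatrix ℝ)
    (κ : ℝ) (hκ : 0 < κ) (v w : Fin N → ℝ)
    (hv0 : ∀ i, 0 ≤ v i) (hv1 : ∑ i, v i = 1)
    (hf : (-L)ᵀ.mulVec v + (κ * (v ⬝ᵥ w)) • v - κ • (Matrix.diagonal w).mulVec v = 0) :
    ∀ i, 0 < v i := by
  -- step: zero spreads along edges
  have hstep : ∀ i, v i = 0 → ∀ j, G.Adj i j → v j = 0 := by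
    intro i hvi j hij
    have h := congrFun hf i
    simp only [Pi.sub_apply, Pi.add_apply, Pi.smul_apply, Pi.zero_apply,
      mulVec_diagonal, smul_eq_mul, hvi, mul_zero, add_zero, sub_zero] at h
    rw [hL] at h
    have h2 : ∑ k, (G.adjMatrix ℝ) k i * v k = 0 := by
      have : ((Matrix.diagonal (fun i => (G.degree i : ℝ)) - G.adjMatrix ℝ))ᵀ.mulVec v i
          = G.degree i * v i - ∑ k, (G.adjMatrix ℝ) k i * v k := by
        simp [Matrix.mulVec, dotProduct, Matrix.transpose_apply,
          Matrix.sub_apply, Matrix.diagonal_apply, sub_mul, Finset.sum_sub_distrib,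
          Finset.sum_ite_eq, hvi]
      simp only [Matrix.transpose_neg, Matrix.neg_mulVec, Pi.neg_apply, neg_eq_zero] at h
      rw [this, hvi] at h
      linarith
    have hnn : ∀ k ∈ Finset.univ, 0 ≤ (G.adjMatrix ℝ) k i * v k := by
      intro k _
      exact mul_nonneg (by simp [SimpleGraph.adjMatrix]; positivity) (hv0 k)
    have := (Finset.sum_eq_zero_iff_of_nonneg hnn).mp h2 j (Finset.mem_univ j)
    rw [SimpleGraph.adjMatrix_apply] at this
    simp [hij.symm] at this
    exact this
  -- spread along walks
  have hwalk : ∀ {a b : Fin N}, G.Walk a b → v a = 0 → v b = 0 := by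
    intro a b p
    induction p with
    | nil => exact id
    | cons h p ih => exact fun ha => ih (hstep _ ha _ h)
  intro i
  rcases lt_or_eq_of_le (hv0 i) with h | h
  · exact h
  · exfalso
    have hall : ∀ j, v j = 0 := fun j => hwalk ((hconn i j).some) h.symm
    rw [Finset.sum_eq_zero (fun j _ => hall j)] at hv1
    norm_num at hv1

theorem fixed_point_positive (N : ℕ) (hN : 2 ≤ N)
    (G : SimpleGraph (Fin N)) [DecidableRel G.Adj] (hconn : G.Connected)
    (L : Matrix (Fin N) (Fin N) ℝ)
    (hL : L = Matrix.diagonal (fun i => (G.degree i : ℝ)) - G.adjMatrix ℝ)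
    (κ : ℝ) (hκ : 0 < κ) (x y : Fin N → ℝ)
    (hx0 : ∀ i, 0 ≤ x i) (hy0 : ∀ i, 0 ≤ y i)
    (hx1 : ∑ i, x i = 1) (hy1 : ∑ i, y i = 1)
    (hfx : (-L)ᵀ.mulVec x + (κ * (x ⬝ᵥ y)) • x - κ • (Matrix.diagonal y).mulVec x = 0)
    (hfy : (-L)ᵀ.mulVec y + (κ * (x ⬝ᵥ y)) • y - κ • (Matrix.diagonal x).mulVec y = 0) :
    (∀ i, 0 < x i) ∧ (∀ i, 0 < y i) := by
  have hfy' : (-L)ᵀ.mulVec y + (κ * (y ⬝ᵥ x)) • y - κ • (Matrix.diagonal x).mulVec y = 0 := by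
    rwa [dotProduct_comm]
  exact ⟨aux_pos N G hconn L hL κ hκ x y hx0 hx1 hfx,
    aux_pos N G hconn L hL κ hκ y x hy0 hy1 hfy'⟩
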